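/- arXiv:1306.4235 — 4 statements merged into one kernel-verified Lean document; each statement's English description precedes it below -/
import Mathlib

section
/- Let U : Grp ⥤ Type be the forgetful functor and for each natural number n let U^n : Grp ⥤ Type be the functor sending a group G to the type Fin n → U(G) and a group homomorphism f to postcomposition with U(f). For all natural numbers n and m, the map sending a tuple of words w : Fin m → FreeGroup (Fin n) to the natural transformation U^n ⟶ U^m whose component at a group G sends g : Fin n → G to the tuple j ↦ FreeGroup.lift g (w j) is a bijection between (Fin m → FreeGroup (Fin n)) and the natural transformations U^n ⟶ U^m. -/
open CategoryTheory

/-- The `n`-th power of the forgetful functor on the category of groups, sending a group `G`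
to `Fin n → G` and a homomorphism to postcomposition with it. -/
def forgetPow (n : ℕ) : GrpCat.{u} ⥤ Type u where
  obj G := Fin n → G
  map f := TypeCat.ofHom (fun x => fun i => f (x i))

/-- Reconstruction of the hom-sets `T_U(n, m) = Nat(Uⁿ, Uᵐ)` of the Lawvere theory of groups
from the forgetful functor `U` on the category of groups: natural transformations
`Uⁿ ⟶ Uᵐ` correspond exactly to `m`-tuples of words in the free group on `n` generators. -/
theorem groupOperations_bijective (n m : ℕ) :
    Function.Bijective (fun w : Fin m → FreeGroup (Fin n) =>
      ({ app := fun G => TypeCat.ofHom (fun g j => FreeGroup.lift g (w j))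
         naturality := by
           intro G H f
           ext g
           funext j
           exact (FreeGroup.lift_unique (f.hom.comp (FreeGroup.lift g))
             (fun x => congrArg f.hom (FreeGroup.lift_apply_of (f := g)))).symm } :
        forgetPow.{u} n ⟶ forgetPow.{u} m)) := by
  set G₀ : GrpCat.{u} := GrpCat.of (FreeGroup (ULift.{u} (Fin n))) with hG₀
  set g₀ : Fin n → G₀ := fun i => FreeGroup.of ⟨i⟩ with hg₀
  rw [Function.bijective_iff_has_inverse]
  refine ⟨fun η j => FreeGroup.freeGroupCongr Equiv.ulift (η.app G₀ g₀ j), ?_, ?_⟩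
  · intro w
    funext j
    simp only
    have key : ((FreeGroup.freeGroupCongr (Equiv.ulift.{u,0} (α := Fin n))).toMonoidHom.comp
        (FreeGroup.lift g₀)) = MonoidHom.id (FreeGroup (Fin n)) := by
      apply FreeGroup.ext_hom
      intro a
      simp [hg₀]
    exact congrArg (fun f : FreeGroup (Fin n) →* FreeGroup (Fin n) => f (w j)) key
  · intro η
    ext G g
    funext j
    simp only
    set f : G₀ ⟶ G := GrpCat.ofHom (FreeGroup.lift (fun x : ULift.{u} (Fin n) => g x.down)) with hf
    have hg : (forgetPow n).map f g₀ = g := by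
      funext i
      simp only [forgetPow, hg₀, hf]
      exact FreeGroup.lift_apply_of
    have nat : (η.app G) ((forgetPow n).map f g₀) j = (forgetPow m).map f (η.app G₀ g₀) j :=
      congrFun (ConcreteCategory.congr_hom (η.naturality f) (g₀ : (forgetPow n).obj G₀)) j
    rw [hg] at nat
    refine Eq.trans ?_ nat.symm
    show FreeGroup.lift g (FreeGroup.freeGroupCongr Equiv.ulift (η.app G₀ g₀ j)) = _
    have comp : (FreeGroup.lift g).comp
        (FreeGroup.freeGroupCongr (Equiv.ulift.{u,0} (α := Fin n))).toMonoidHom =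
        FreeGroup.lift (fun x : ULift.{u} (Fin n) => g x.down) := by
      apply FreeGroup.ext_hom
      intro a
      simp
      exact FreeGroup.lift_apply_of
    have := congrArg (fun F : FreeGroup (ULift.{u} (Fin n)) →* G => F (η.app G₀ g₀ j)) comp
    exact this
end

section
/- Let R be a ring and U : ModuleCat R ⥤ Type the forgetful functor on the category of (left) R-modules. The map sending r : R to the natural endomorphism of U whose component at an R-module M is x ↦ r • x is a bijection between R and the natural transformations U ⟶ U. -/
open CategoryTheory

/-- Reconstruction of a ring from its category of modules, at the level of unary operations:
the natural endomorphisms of the forgetful functor `U : ModuleCat R ⥤ Type` correspond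
exactly to the elements of `R`, via `r ↦ (x ↦ r • x)`. -/
theorem moduleForget_end_bijective (R : Type u) [Ring R] :
    Function.Bijective (fun r : R =>
      ({ app := fun M => TypeCat.ofHom (fun (x : M) => r • x)
         naturality := by
           intro M N f
           ext x
           exact (map_smul f.hom r x).symm } :
        forget (ModuleCat.{u} R) ⟶ forget (ModuleCat.{u} R))) := by
  constructor
  · intro r s h
    have := types_congr_hom (congrFun (congrArg NatTrans.app h) (ModuleCat.of R R)) (1 : R)
    simpa using this
  · intro η
    refine ⟨η.app (ModuleCat.of R R) (1 : R), ?_⟩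
    ext M x
    have := types_congr_hom (η.naturality
      (ModuleCat.ofHom (LinearMap.toSpanSingleton R M x))) (1 : R)
    simp only [types_comp_apply, ModuleCat.forget_map] at this
    show η.app (ModuleCat.of R R) (1 : R) • x = η.app M x
    convert this.symm
    · rfl
    exact (one_smul R x).symm
end

section
/- Let R be a commutative ring. The map from R to the endomorphisms of the identity functor 𝟭 (ModuleCat R), sending r to the natural transformation whose component at an R-module M is the R-linear map x ↦ r • x, is bijective, sends 1 to the identity natural transformation, sends products in R to (vertical) compositions of natural transformations, and sends sums in R to sums of natural transformations; i.e. it is a ring isomorphism from R onto the endomorphism ring of the identity functor of ModuleCat R. -/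
open CategoryTheory

/-- The map from a commutative ring `R` to the endomorphisms of the identity functor of
`ModuleCat R`, sending `r` to the natural transformation whose component at `M` is the
`R`-linear map `x ↦ r • x`. -/
def smulNat (R : Type u) [CommRing R] (r : R) : End (𝟭 (ModuleCat.{u} R)) where
  app M := ModuleCat.ofHom (LinearMap.lsmul R M r)
  naturality := by
    intro M N f
    ext x
    exact (map_smul f.hom r x).symm

/-- Reconstruction of a commutative ring as the endomorphism ring of the identity functor of
its category of modules (the center of the module category): the map `r ↦ (x ↦ r • x)` is
bijective, preserves `1`, products and sums, i.e. it is a ring isomorphism onto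
`End (𝟭 (ModuleCat R))`. -/
theorem smulNat_ringIso (R : Type u) [CommRing R] :
    Function.Bijective (smulNat R) ∧
      smulNat R 1 = 1 ∧
      (∀ r s : R, smulNat R (r * s) = smulNat R r * smulNat R s) ∧
      (∀ r s : R, smulNat R (r + s) = smulNat R r + smulNat R s) := by
  refine ⟨⟨?_, ?_⟩, ?_, ?_, ?_⟩
  · intro r s h
    have := congrArg (fun η : End (𝟭 (ModuleCat.{u} R)) =>
      η.app (ModuleCat.of R R) (1 : R)) h
    have h2 : r * 1 = s * 1 := this
    simpa using h2
  · intro η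
    refine ⟨η.app (ModuleCat.of R R) (1 : R), ?_⟩
    apply NatTrans.ext; funext M; ext m
    have h := ConcreteCategory.congr_hom
      (η.naturality (X := ModuleCat.of R R) (Y := M) (ModuleCat.ofHom (LinearMap.toSpanSingleton R M m))) (1 : R)
    have h2 : η.app M ((1 : R) • m) = (η.app (ModuleCat.of R R) (1 : R)) • m := h
    rw [one_smul] at h2
    exact h2.symm
  · apply NatTrans.ext; funext M; ext m
    exact one_smul R m
  · intro r s
    apply NatTrans.ext; funext M; ext m
    show (r * s) • m = r • (s • m)
    rw [mul_smul]
  · intro r s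
    apply NatTrans.ext; funext M; ext m
    show (r + s) • m = r • m + s • m
    rw [add_smul]
end

section
/- Let k be a field and G a finite group. The group homomorphism from G to the group of monoidal natural automorphisms of the forgetful (fiber) functor FDRep k G ⥤ FGModuleCat k, sending g to the automorphism whose component at a finite-dimensional representation (V, ρ) is the linear automorphism ρ(g) of V, is bijective; that is, G is isomorphic to the group of monoidal natural automorphisms of the fiber functor on its category of finite-dimensional representations. -/
open CategoryTheory MonoidalCategory

universe u

/-- The fiber functor of `FDRep k G`, i.e. the forgetful functor to finite-dimensional
vector spaces, bundled as a (lax) monoidal functor. -/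
noncomputable def fiberFunctor (k G : Type u) [Field k] [Group G] :
    LaxMonoidalFunctor (FDRep k G) (FGModuleCat k) :=
  LaxMonoidalFunctor.of (Action.forget (FGModuleCat k) (MonCat.of G))

/-- The monoidal natural automorphism of the fiber functor induced by a group element `g`,
whose component at a representation `(V, ρ)` is the linear automorphism `ρ g` of `V`. -/
noncomputable def tannakaApp (k G : Type u) [Field k] [Group G] (g : G) :
    Aut (fiberFunctor k G) :=
  LaxMonoidalFunctor.isoOfComponents
    (fun X =>
      { hom := FGModuleCat.ofHom (X.ρ g)
        inv := FGModuleCat.ofHom (X.ρ g⁻¹)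
        hom_inv_id := by
          show FGModuleCat.ofHom (X.ρ g⁻¹ * X.ρ g) = _
          rw [← map_mul, inv_mul_cancel, map_one]
          rfl
        inv_hom_id := by
          show FGModuleCat.ofHom (X.ρ g * X.ρ g⁻¹) = _
          rw [← map_mul, mul_inv_cancel, map_one]
          rfl })
    (naturality := fun f => (f.comm g).symm)
    (unit := by simp [fiberFunctor]; exact (Action.tensorUnit_ρ (V := FGModuleCat k) (G := G) (g := g)))
    (tensor := fun X Y => by simp [fiberFunctor]; exact (Action.tensor_ρ (X := X) (Y := Y) (g := g)))

/-- The group homomorphism from `G` to the group of monoidal natural automorphisms of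
the fiber functor `FDRep k G ⥤ FGModuleCat k`, sending `g` to the automorphism whose
component at `(V, ρ)` is `ρ g`. -/
noncomputable def tannakaHom (k G : Type u) [Field k] [Group G] :
    G →* Aut (fiberFunctor k G) where
  toFun := tannakaApp k G
  map_one' := by
    apply Iso.ext
    apply LaxMonoidalFunctor.hom_ext
    apply NatTrans.ext
    funext X
    show FGModuleCat.ofHom (X.ρ 1) = _
    rw [map_one]
    rfl
  map_mul' g h := by
    apply Iso.ext
    apply LaxMonoidalFunctor.hom_ext
    apply NatTrans.ext
    funext X
    show FGModuleCat.ofHom (X.ρ (g * h)) = _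
    rw [map_mul]
    rfl

namespace TannakaAux

open Finset

variable {k G : Type u} [Field k] [Group G]

/-- The right regular representation on `G → k`. -/
def rightRegular : Representation k G (G → k) where
  toFun s :=
    { toFun := fun f t => f (t * s)
      map_add' := fun _ _ => rfl
      map_smul' := fun _ _ => rfl }
  map_one' := by ext f t; simp
  map_mul' s t := by ext f u; simp [mul_assoc]

@[simp]
lemma rightRegular_apply (s : G) (f : G → k) (t : G) : rightRegular s f t = f (t * s) := rfl

/-- The left regular representation on `G → k`. -/
def leftRegular : Representation k G (G → k) where
  toFun s :=
    { toFun := fun f t => f (s⁻¹ * t)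
      map_add' := fun _ _ => rfl
      map_smul' := fun _ _ => rfl }
  map_one' := by ext f t; simp
  map_mul' s t := by ext f u; simp [mul_assoc]

@[simp]
lemma leftRegular_apply (s : G) (f : G → k) (t : G) : leftRegular s f t = f (s⁻¹ * t) := rfl

variable (k G) in
/-- The right regular representation as an object of `FDRep k G`. -/
noncomputable def τᵣ [Fintype G] : FDRep k G := FDRep.of rightRegular

variable [Fintype G]

lemma τᵣ_ρ (s : G) : (τᵣ k G).ρ s = rightRegular s := rfl

/-- Pointwise multiplication as a morphism `τᵣ ⊗ τᵣ ⟶ τᵣ`. -/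
noncomputable def mulMor : τᵣ k G ⊗ τᵣ k G ⟶ τᵣ k G where
  hom := FGModuleCat.ofHom (LinearMap.mul' k (G → k))
  comm g := by
    apply FGModuleCat.hom_ext
    apply TensorProduct.ext'
    intro f f'
    rfl

/-- The inclusion of constants as a morphism `𝟙_ (FDRep k G) ⟶ τᵣ`. -/
noncomputable def oneMor : 𝟙_ (FDRep k G) ⟶ τᵣ k G where
  hom := FGModuleCat.ofHom
    { toFun := fun a => Function.const G a
      map_add' := fun _ _ => rfl
      map_smul' := fun _ _ => rfl }
  comm g := by
    ext a
    rfl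

/-- Left translation by `t` as a morphism `τᵣ ⟶ τᵣ`. -/
noncomputable def lmulMor (t : G) : τᵣ k G ⟶ τᵣ k G where
  hom := FGModuleCat.ofHom (leftRegular t)
  comm g := by
    ext f
    funext x
    show leftRegular t (rightRegular g f) x = rightRegular g (leftRegular t f) x
    simp [mul_assoc]
    show f (t⁻¹ * x * g) = f (t⁻¹ * (x * g))
    rw [mul_assoc]

/-- For `v : X`, the equivariant map `τᵣ ⟶ X`, `f ↦ ∑ g, f g • ρ g⁻¹ v`. -/
noncomputable def sumMor (X : FDRep k G) (v : X) : τᵣ k G ⟶ X where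
  hom := FGModuleCat.ofHom
    { toFun := fun f => ∑ g : G, f g • X.ρ g⁻¹ v
      map_add' := fun (f f' : G → k) => by
        rw [← Finset.sum_add_distrib]
        exact Finset.sum_congr rfl fun x _ => by rw [Pi.add_apply, add_smul]
      map_smul' := fun (c : k) (f : G → k) => by
        rw [RingHom.id_apply, Finset.smul_sum]
        exact Finset.sum_congr rfl fun x _ => by rw [Pi.smul_apply, smul_eq_mul, mul_smul]
    }
  comm g := by
    ext f
    let g' : G := g
    show ∑ t : G, rightRegular g' f t • X.ρ t⁻¹ v = X.ρ g' (∑ t : G, f t • X.ρ t⁻¹ v)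
    rw [map_sum]
    refine Fintype.sum_bijective (fun t : G => t * g') (Group.mulRight_bijective _) _ _
      (fun t => ?_)
    simp only [rightRegular_apply, map_smul, ← Module.End.mul_apply, ← map_mul, mul_inv_rev,
      mul_inv_cancel_left]
    rfl

lemma sumMor_hom_apply (X : FDRep k G) (v : X) (f : G → k) :
    (sumMor X v).hom f = ∑ g : G, f g • X.ρ g⁻¹ v := rfl

end TannakaAux

open TannakaAux Finset in
/-- **Tannaka duality for finite groups**: a finite group `G` is isomorphic to the group of
monoidal natural automorphisms of the fiber functor on its category of finite-dimensional
`k`-linear representations; the canonical homomorphism `g ↦ ((V, ρ) ↦ ρ g)` is bijective. -/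
theorem tannaka_duality (k G : Type u) [Field k] [Group G] [Finite G] :
    Function.Bijective (tannakaHom k G) := by
  have : Fintype G := Fintype.ofFinite G
  classical
  constructor
  · rw [injective_iff_map_eq_one]
    intro g hg
    have h := congrArg (fun α : Aut (fiberFunctor k G) => α.hom.hom.app (τᵣ k G)) hg
    have h2 : (rightRegular g : (G → k) →ₗ[k] (G → k)) = LinearMap.id := congrArg (fun φ => φ.hom.hom) h
    have h3 := congrFun (LinearMap.congr_fun h2 (Pi.single (1 : G) (1 : k))) g⁻¹
    rw [rightRegular_apply, inv_mul_cancel, Pi.single_eq_same, LinearMap.id_apply,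
      Pi.single_apply] at h3
    by_contra hg1
    rw [if_neg (fun hh : g⁻¹ = 1 => hg1 (inv_eq_one.mp hh))] at h3
    exact one_ne_zero h3
  · intro η
    let u : (G → k) →ₗ[k] (G → k) := (η.hom.hom.app (τᵣ k G)).hom.hom
    have nat : ∀ {X Y : FDRep k G} (f : X ⟶ Y) (v : X),
        η.hom.hom.app Y (f.hom v) = f.hom (η.hom.hom.app X v) := by
      intro X Y f v
      exact ConcreteCategory.congr_hom (η.hom.hom.naturality f) v
    -- tensor compatibility
    have tens : ∀ f f' : G → k, η.hom.hom.app (τᵣ k G ⊗ τᵣ k G) (f ⊗ₜ[k] f') = u f ⊗ₜ[k] u f' := by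
      have h := η.hom.isMonoidal.tensor (τᵣ k G) (τᵣ k G)
      simp only [fiberFunctor, LaxMonoidalFunctor.of_toFunctor] at h
      intro f f'
      exact ConcreteCategory.congr_hom h (f ⊗ₜ[k] f')
    -- u is multiplicative
    have umul : ∀ f f' : G → k, u (f * f') = u f * u f' := by
      intro f f'
      have h := nat mulMor (f ⊗ₜ[k] f')
      have e1 : (mulMor (k := k) (G := G)).hom (f ⊗ₜ[k] f') = f * f' := rfl
      rw [e1, tens] at h
      exact h
    -- u preserves 1
    have hone : η.hom.hom.app (𝟙_ (FDRep k G)) = 𝟙 _ := by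
      have h := η.hom.isMonoidal.unit
      simp only [fiberFunctor, LaxMonoidalFunctor.of_toFunctor] at h
      exact (Category.id_comp _).symm.trans h
    have uone : u 1 = 1 := by
      have h := nat (X := 𝟙_ (FDRep k G)) oneMor (1 : k)
      rw [hone] at h
      exact h
    -- u commutes with left translation
    have ucomm : ∀ (t : G) (f : G → k), u (leftRegular t f) = leftRegular t (u f) :=
      fun t f => nat (lmulMor t) f
    -- the scalar function b
    set b : G → k := fun t => u (Pi.single t 1) 1 with hb
    have hsum : ∑ t : G, b t = 1 := by
      have e1 : ∑ t : G, (Pi.single t 1 : G → k) = 1 := by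
        funext x
        simp [Finset.sum_apply, Pi.single_apply]
      calc ∑ t : G, b t = u (∑ t : G, (Pi.single t 1 : G → k)) 1 := by
            rw [map_sum]; simp [hb, Finset.sum_apply]
        _ = 1 := by rw [e1, uone]; rfl
    have horth : ∀ t t' : G, t ≠ t' → b t * b t' = 0 := by
      intro t t' htt
      have e1 : (Pi.single t 1 : G → k) * Pi.single t' 1 = 0 := by
        funext x
        simp only [Pi.mul_apply, Pi.single_apply, Pi.zero_apply]
        rcases eq_or_ne x t with h1 | h1
        · rw [if_neg (fun h2 => htt (h1.symm.trans h2)), mul_zero]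
        · rw [if_neg h1, zero_mul]
      have h2 := umul (Pi.single t 1) (Pi.single t' 1)
      rw [e1, map_zero] at h2
      exact congrFun h2.symm 1
    obtain ⟨s, hs⟩ : ∃ s : G, b s ≠ 0 := by
      by_contra hc
      push_neg at hc
      rw [Finset.sum_congr rfl (fun t _ => hc t), Finset.sum_const_zero] at hsum
      exact zero_ne_one hsum
    have hbs : b s = 1 := by
      have hsq : (Pi.single s 1 : G → k) * Pi.single s 1 = Pi.single s 1 := by
        funext x
        simp only [Pi.mul_apply, Pi.single_apply]
        split <;> simp
      have h2 := umul (Pi.single s 1) (Pi.single s 1)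
      rw [hsq] at h2
      have h3 : b s = b s * b s := congrFun h2 1
      exact mul_right_cancel₀ hs (by rw [one_mul]; exact h3.symm)
    have hbx : ∀ x : G, x ≠ s → b x = 0 := by
      intro x hx
      have := horth s x (fun hh => hx hh.symm)
      rw [hbs, one_mul] at this
      exact this
    -- compute u (single 1 1)
    have hlsingle : ∀ t : G, leftRegular t (Pi.single 1 1 : G → k) = Pi.single t 1 := by
      intro t
      funext y
      simp only [leftRegular_apply, Pi.single_apply]
      congr 1
      simp [eq_comm, inv_mul_eq_one, eq_comm (a := y)]
    have key : ∀ x : G, u (Pi.single 1 1) x = b x⁻¹ := by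
      intro x
      have h1 : u (Pi.single 1 1) x = leftRegular x⁻¹ (u (Pi.single 1 1)) 1 := by
        simp
      rw [h1, ← ucomm, hlsingle]
    have usin : u (Pi.single 1 1) = Pi.single s⁻¹ 1 := by
      funext x
      rw [key, Pi.single_apply]
      by_cases hx : x = s⁻¹
      · rw [if_pos hx, hx, inv_inv, hbs]
      · rw [if_neg hx, hbx _ (by simpa [inv_eq_iff_eq_inv] using hx)]
    -- conclude
    refine ⟨s, ?_⟩
    apply Iso.ext
    apply LaxMonoidalFunctor.hom_ext
    apply NatTrans.ext
    funext X
    apply FGModuleCat.hom_ext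
    show (X.ρ s : X →ₗ[k] X) = (η.hom.hom.app X).hom.hom
    apply LinearMap.ext
    intro v
    have h := nat (sumMor X v) (Pi.single 1 1)
    have e1 : (sumMor X v).hom (Pi.single 1 1) = v := by
      rw [sumMor_hom_apply, Finset.sum_eq_single 1]
      · simp
      · intro t _ ht
        rw [Pi.single_apply, if_neg ht, zero_smul]
      · intro ht; exact absurd (Finset.mem_univ 1) ht
    have e2 : (sumMor X v).hom (Pi.single s⁻¹ 1) = X.ρ s v := by
      rw [sumMor_hom_apply, Finset.sum_eq_single s⁻¹]
      · simp
      · intro t _ ht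
        rw [Pi.single_apply, if_neg ht, zero_smul]
      · intro ht; exact absurd (Finset.mem_univ s⁻¹) ht
    rw [e1, show (η.hom.hom.app (τᵣ k G)) (Pi.single 1 1) = Pi.single s⁻¹ (1 : k) from usin,
      e2] at h
    exact h.symm
end
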